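/- Let T ∈ GL(m, ℚ) with m ≥ 1. If T is not elliptic (its image as a subgroup of GL(m, ℝ) is not contained in any conjugate of O(m, ℝ)), then there exists a vector v ∈ ℚ^m such that the set {‖T^k v‖ : k ∈ ℤ} is unbounded. -/

import Mathlib

open Matrix Filter Topology

attribute [local instance] Matrix.normedAddCommGroup Matrix.normedSpace

private lemma orth_zpow' {m : ℕ} (u : GL (Fin m) ℝ)
    (hu : (u : Matrix (Fin m) (Fin m) ℝ) ∈ Matrix.orthogonalGroup (Fin m) ℝ) (k : ℤ) :
    ((u ^ k : GL (Fin m) ℝ) : Matrix (Fin m) (Fin m) ℝ) ∈ Matrix.orthogonalGroup (Fin m) ℝ := by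
  obtain ⟨n, rfl | rfl⟩ := k.eq_nat_or_neg
  · rw [zpow_natCast, Units.val_pow_eq_pow_val]
    exact pow_mem hu n
  · rw [_root_.zpow_neg, zpow_natCast]
    set w := u ^ n with hw
    have hwmem : (w : Matrix (Fin m) (Fin m) ℝ) ∈ Matrix.orthogonalGroup (Fin m) ℝ := by
      rw [hw, Units.val_pow_eq_pow_val]; exact pow_mem hu n
    have h1 : star (w : Matrix (Fin m) (Fin m) ℝ) * w = 1 :=
      (Matrix.mem_unitaryGroup_iff').mp hwmem
    have h2 : ((w⁻¹ : GL (Fin m) ℝ) : Matrix (Fin m) (Fin m) ℝ)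
        = star (w : Matrix (Fin m) (Fin m) ℝ) := by
      calc ((w⁻¹ : GL (Fin m) ℝ) : Matrix (Fin m) (Fin m) ℝ)
          = 1 * ((w⁻¹ : GL (Fin m) ℝ) : Matrix (Fin m) (Fin m) ℝ) := (one_mul _).symm
        _ = star (w : Matrix _ _ ℝ) * ((w : Matrix _ _ ℝ) * ((w⁻¹ : GL (Fin m) ℝ) : Matrix _ _ ℝ)) := by
            rw [← h1, mul_assoc]
        _ = star (w : Matrix _ _ ℝ) := by
            rw [← Units.val_mul, mul_inv_cancel, Units.val_one, mul_one]
    rw [h2]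
    exact Matrix.mem_unitaryGroup_iff.mpr (by rw [star_star]; exact h1)

theorem stmt_7 (m : ℕ) (hm : 1 ≤ m) (T : GL (Fin m) ℚ)
    (hnotelliptic : ¬ ∃ P : Matrix (Fin m) (Fin m) ℝ, IsUnit P ∧
      ∀ k : ℤ, P⁻¹ * (((T ^ k : GL (Fin m) ℚ) :
          Matrix (Fin m) (Fin m) ℚ).map ((↑) : ℚ → ℝ)) * P ∈
        Matrix.orthogonalGroup (Fin m) ℝ) :
    ∃ v : Fin m → ℚ, ¬ BddAbove (Set.range fun k : ℤ =>
      Real.sqrt (∑ i, ((((T ^ k : GL (Fin m) ℚ) :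
        Matrix (Fin m) (Fin m) ℚ).mulVec v i : ℝ)) ^ 2)) := by
  by_contra hcon
  push_neg at hcon
  apply hnotelliptic
  haveI : Nonempty (Fin m) := ⟨⟨0, hm⟩⟩
  set B : ℤ → Matrix (Fin m) (Fin m) ℝ := fun k =>
    ((T ^ k : GL (Fin m) ℚ) : Matrix (Fin m) (Fin m) ℚ).map ((↑) : ℚ → ℝ) with hBdef
  set U : GL (Fin m) ℝ := Units.map ((Rat.castHom ℝ).mapMatrix.toMonoidHom) T with hUdef
  have hUB : ∀ k : ℤ, ((U ^ k : GL (Fin m) ℝ) : Matrix (Fin m) (Fin m) ℝ) = B k := by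
    intro k
    have h1 : U ^ k = Units.map ((Rat.castHom ℝ).mapMatrix.toMonoidHom) (T ^ k) :=
      ((Units.map ((Rat.castHom ℝ).mapMatrix.toMonoidHom :
        Matrix (Fin m) (Fin m) ℚ →* Matrix (Fin m) (Fin m) ℝ)).map_zpow T k).symm
    rw [h1, hBdef]
    ext i j
    simp only [Units.coe_map, MonoidHom.coe_coe, RingHom.mapMatrix_apply,
      Matrix.map_apply, Rat.coe_castHom]
    rfl
  have hBadd : ∀ k l : ℤ, B (k + l) = B k * B l := by
    intro k l
    rw [← hUB, ← hUB, ← hUB, _root_.zpow_add, Units.val_mul]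
  have hB0 : B 0 = 1 := by rw [← hUB]; simp
  have hBinv : ∀ k : ℤ, B (-k) * B k = 1 := by
    intro k; rw [← hBadd, neg_add_cancel, hB0]
  -- uniform bound on entries
  obtain ⟨C, hC1, hCb⟩ : ∃ C : ℝ, 1 ≤ C ∧ ∀ (k : ℤ) (i j : Fin m), |B k i j| ≤ C := by
    have hsingle : ∀ j : Fin m, ∃ c : ℝ, ∀ (k : ℤ) (i : Fin m), |B k i j| ≤ c := by
      intro j
      obtain ⟨c, hc⟩ := hcon (Pi.single j 1)
      refine ⟨c, fun k i => ?_⟩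
      have h2 : ∀ i' : Fin m,
          ((((T ^ k : GL (Fin m) ℚ) : Matrix (Fin m) (Fin m) ℚ).mulVec (Pi.single j 1) i' : ℚ) : ℝ)
          = B k i' j := by
        intro i'
        rw [hBdef]
        simp [Matrix.mulVec_single, Matrix.map_apply]
      calc |B k i j| = Real.sqrt ((B k i j) ^ 2) := (Real.sqrt_sq_eq_abs _).symm
        _ ≤ Real.sqrt (∑ i' : Fin m, (B k i' j) ^ 2) :=
            Real.sqrt_le_sqrt (Finset.single_le_sum
              (f := fun i' : Fin m => (B k i' j) ^ 2)
              (fun i' _ => sq_nonneg _) (Finset.mem_univ i))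
        _ = Real.sqrt (∑ i', ((((T ^ k : GL (Fin m) ℚ) :
              Matrix (Fin m) (Fin m) ℚ).mulVec (Pi.single j 1) i' : ℚ) : ℝ) ^ 2) := by
            congr 1
            exact Finset.sum_congr rfl fun i' _ => by rw [h2 i']
        _ ≤ c := hc ⟨k, rfl⟩
    choose c hc using hsingle
    refine ⟨1 + ∑ j, |c j|,
      le_add_of_nonneg_right (Finset.sum_nonneg fun j _ => abs_nonneg _), ?_⟩
    intro k i j
    have h3 : |c j| ≤ ∑ j', |c j'| :=
      Finset.single_le_sum (f := fun j' => |c j'|) (fun _ _ => abs_nonneg _) (Finset.mem_univ j)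
    have := (hc j k i).trans ((le_abs_self _).trans h3)
    linarith
  have hC0 : (0:ℝ) < C := lt_of_lt_of_le one_pos hC1
  set K : ℝ := (m : ℝ) ^ 2 * C ^ 2 with hKdef
  have hK0 : 0 < K := by
    have : (0:ℝ) < (m:ℝ) := by exact_mod_cast hm
    positivity
  -- quadratic lower bound
  have hlow : ∀ (k : ℤ) (x : Fin m → ℝ),
      (∑ i, x i ^ 2) ≤ K * ∑ i, ((B k *ᵥ x) i) ^ 2 := by
    intro k x
    set w := B k *ᵥ x with hw
    have hxi : ∀ i, x i = (B (-k) *ᵥ w) i := by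
      intro i
      rw [hw, Matrix.mulVec_mulVec, hBinv, Matrix.one_mulVec]
    have habs : ∀ i, |(B (-k) *ᵥ w) i| ≤ C * ∑ j, |w j| := by
      intro i
      calc |(B (-k) *ᵥ w) i| = |∑ j, B (-k) i j * w j| := by
            rw [Matrix.mulVec, dotProduct]
        _ ≤ ∑ j, |B (-k) i j * w j| := Finset.abs_sum_le_sum_abs _ _
        _ ≤ ∑ j, C * |w j| := Finset.sum_le_sum fun j _ => by
            rw [abs_mul]
            exact mul_le_mul_of_nonneg_right (hCb _ _ _) (abs_nonneg _)
        _ = C * ∑ j, |w j| := by rw [Finset.mul_sum]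
    calc ∑ i, x i ^ 2 = ∑ i, ((B (-k) *ᵥ w) i) ^ 2 :=
          Finset.sum_congr rfl fun i _ => by rw [hxi i]
      _ ≤ ∑ _i : Fin m, (C * ∑ j, |w j|) ^ 2 := Finset.sum_le_sum fun i _ => by
          rw [← sq_abs]
          exact pow_le_pow_left₀ (abs_nonneg _) (habs i) 2
      _ = (m:ℝ) * (C * ∑ j, |w j|) ^ 2 := by
          rw [Finset.sum_const, Finset.card_univ, Fintype.card_fin, nsmul_eq_mul]
      _ = (m:ℝ) * C ^ 2 * (∑ j, |w j|) ^ 2 := by ring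
      _ ≤ (m:ℝ) * C ^ 2 * ((m:ℝ) * ∑ j, |w j| ^ 2) := by
          refine mul_le_mul_of_nonneg_left ?_ (by positivity)
          have h4 := sq_sum_le_card_mul_sum_sq
            (s := (Finset.univ : Finset (Fin m))) (f := fun j => |w j|)
          simpa [Finset.card_univ] using h4
      _ = K * ∑ j, w j ^ 2 := by
          simp only [sq_abs, hKdef]; ring
  -- averaged Gram matrices
  set F : ℕ → Matrix (Fin m) (Fin m) ℝ := fun k => (B k)ᵀ * B k with hFdef
  set g : ℕ → Matrix (Fin m) (Fin m) ℝ := fun N =>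
    ((N : ℝ) + 1)⁻¹ • ∑ k ∈ Finset.range (N + 1), F k with hgdef
  have hFnorm : ∀ k : ℕ, ‖F k‖ ≤ (m : ℝ) * C ^ 2 := by
    intro k
    rw [Matrix.norm_le_iff (by positivity)]
    intro i j
    have h5 : F k i j = ∑ l, B k l i * B k l j := by
      simp [hFdef, Matrix.mul_apply, Matrix.transpose_apply]
    rw [h5, Real.norm_eq_abs]
    calc |∑ l, B k l i * B k l j| ≤ ∑ l, |B k l i * B k l j| := Finset.abs_sum_le_sum_abs _ _
      _ ≤ ∑ _l : Fin m, C * C := Finset.sum_le_sum fun l _ => by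
          rw [abs_mul]
          exact mul_le_mul (hCb _ _ _) (hCb _ _ _) (abs_nonneg _) (le_of_lt hC0)
      _ = (m:ℝ) * C ^ 2 := by
          rw [Finset.sum_const, Finset.card_univ, Fintype.card_fin, nsmul_eq_mul]; ring
  have hgnorm : ∀ N, ‖g N‖ ≤ (m : ℝ) * C ^ 2 := by
    intro N
    simp only [hgdef]
    rw [norm_smul, Real.norm_eq_abs, abs_of_nonneg (by positivity)]
    calc ((N:ℝ) + 1)⁻¹ * ‖∑ k ∈ Finset.range (N + 1), F k‖
        ≤ ((N:ℝ) + 1)⁻¹ * (((N:ℝ) + 1) * ((m:ℝ) * C ^ 2)) := by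
          refine mul_le_mul_of_nonneg_left ?_ (by positivity)
          calc ‖∑ k ∈ Finset.range (N + 1), F k‖ ≤ ∑ k ∈ Finset.range (N + 1), ‖F k‖ :=
                norm_sum_le _ _
            _ ≤ ∑ _k ∈ Finset.range (N + 1), (m:ℝ) * C ^ 2 :=
                Finset.sum_le_sum fun k _ => hFnorm k
            _ = ((N:ℝ) + 1) * ((m:ℝ) * C ^ 2) := by
                rw [Finset.sum_const, Finset.card_range, nsmul_eq_mul]; push_cast; ring
      _ = (m:ℝ) * C ^ 2 := by
          field_simp
  obtain ⟨G, -, φ, hφmono, hφlim⟩ :=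
    tendsto_subseq_of_bounded (Metric.isBounded_closedBall
      (x := (0 : Matrix (Fin m) (Fin m) ℝ)) (r := (m : ℝ) * C ^ 2)) (x := g)
      (fun N => by simpa [Metric.mem_closedBall, dist_zero_right] using hgnorm N)
  -- invariance under conjugation by B 1
  have hgconj : ∀ N : ℕ, (B 1)ᵀ * g N * (B 1)
      = g N + ((N:ℝ) + 1)⁻¹ • (F (N + 1) - 1) := by
    intro N
    have hterm : ∀ k : ℕ, (B 1)ᵀ * F k * B 1 = F (k + 1) := by
      intro k
      have hBk1 : B ((k : ℤ) + 1) = B k * B 1 := hBadd k 1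
      have hcast : ((k + 1 : ℕ) : ℤ) = (k : ℤ) + 1 := by push_cast; ring
      simp only [hFdef]
      rw [hcast, hBk1, Matrix.transpose_mul]
      simp only [Matrix.mul_assoc]
    have hshift : ∑ k ∈ Finset.range (N + 1), F (k + 1)
        = (∑ k ∈ Finset.range (N + 1), F k) + (F (N + 1) - 1) := by
      have h1 := Finset.sum_range_succ' F (N + 1)
      have h0 : F 0 = 1 := by
        simp only [hFdef]
        norm_num [hB0]
      rw [h0] at h1
      have h2 := Finset.sum_range_succ F (N + 1)
      have h3 := h1.symm.trans h2
      calc ∑ k ∈ Finset.range (N + 1), F (k + 1)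
          = (∑ k ∈ Finset.range (N + 1), F (k + 1) + 1) - 1 := by abel
        _ = ((∑ k ∈ Finset.range (N + 1), F k) + F (N + 1)) - 1 := by rw [h3]
        _ = (∑ k ∈ Finset.range (N + 1), F k) + (F (N + 1) - 1) := by abel
    calc (B 1)ᵀ * g N * B 1
        = ((N:ℝ) + 1)⁻¹ • ∑ k ∈ Finset.range (N + 1), (B 1)ᵀ * F k * B 1 := by
          simp only [hgdef]
          rw [Matrix.mul_smul, Matrix.smul_mul, Finset.mul_sum, Finset.sum_mul]
      _ = ((N:ℝ) + 1)⁻¹ • ∑ k ∈ Finset.range (N + 1), F (k + 1) := by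
          rw [Finset.sum_congr rfl fun k _ => hterm k]
      _ = ((N:ℝ) + 1)⁻¹ • ((∑ k ∈ Finset.range (N + 1), F k) + (F (N + 1) - 1)) := by
          rw [hshift]
      _ = g N + ((N:ℝ) + 1)⁻¹ • (F (N + 1) - 1) := by
          rw [smul_add]
  have hinv : (B 1)ᵀ * G * (B 1) = G := by
    have he0 : Tendsto (fun n => ((φ n : ℝ) + 1)⁻¹ • (F (φ n + 1) - 1)) atTop (𝓝 0) := by
      apply squeeze_zero_norm (a := fun n => ((φ n : ℝ) + 1)⁻¹ * ((m:ℝ) * C ^ 2 + 1))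
      · intro n
        rw [norm_smul, Real.norm_eq_abs, abs_of_nonneg (by positivity)]
        refine mul_le_mul_of_nonneg_left ?_ (by positivity)
        calc ‖F (φ n + 1) - 1‖ ≤ ‖F (φ n + 1)‖ + ‖(1 : Matrix (Fin m) (Fin m) ℝ)‖ :=
              norm_sub_le _ _
          _ ≤ (m:ℝ) * C ^ 2 + 1 := by
              refine add_le_add (hFnorm _) ?_
              rw [Matrix.norm_le_iff zero_le_one]
              intro i j
              rw [Real.norm_eq_abs, Matrix.one_apply]
              split_ifs <;> simp
      · have h1 : Tendsto (fun n => ((φ n : ℝ) + 1)) atTop atTop :=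
          tendsto_atTop_add_const_right _ 1
            (tendsto_natCast_atTop_atTop.comp hφmono.tendsto_atTop)
        have h2 : Tendsto (fun n => ((φ n : ℝ) + 1)⁻¹) atTop (𝓝 0) := h1.inv_tendsto_atTop
        simpa using h2.mul_const ((m:ℝ) * C ^ 2 + 1)
    have hcont : Continuous fun M : Matrix (Fin m) (Fin m) ℝ => (B 1)ᵀ * M * B 1 :=
      (continuous_const.matrix_mul continuous_id).matrix_mul continuous_const
    have hL : Tendsto (fun n => (B 1)ᵀ * g (φ n) * B 1) atTop (𝓝 ((B 1)ᵀ * G * B 1)) :=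
      (hcont.tendsto G).comp hφlim
    have hR : Tendsto (fun n => (B 1)ᵀ * g (φ n) * B 1) atTop (𝓝 G) := by
      simp only [hgconj]
      have h := hφlim.add he0; rw [add_zero] at h; exact h
    exact tendsto_nhds_unique hL hR
  -- symmetry
  have hGt : Gᵀ = G := by
    have hgsym : ∀ N, (g N)ᵀ = g N := by
      intro N
      simp only [hgdef, hFdef]
      rw [Matrix.transpose_smul, Matrix.transpose_sum]
      congr 1
      exact Finset.sum_congr rfl fun k _ => by
        rw [Matrix.transpose_mul, Matrix.transpose_transpose]
    have hcont : Continuous fun M : Matrix (Fin m) (Fin m) ℝ => Mᵀ :=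
      continuous_id.matrix_transpose
    have h1 : Tendsto (fun n => (g (φ n))ᵀ) atTop (𝓝 Gᵀ) := (hcont.tendsto G).comp hφlim
    have h2 : Tendsto (fun n => (g (φ n))ᵀ) atTop (𝓝 G) := by
      simp only [hgsym]; exact hφlim
    exact tendsto_nhds_unique h1 h2
  have hGherm : G.IsHermitian := by
    rw [Matrix.IsHermitian]
    have h6 : Gᴴ = Gᵀ := by
      ext i j; simp [Matrix.conjTranspose_apply]
    rw [h6, hGt]
  -- positive definiteness
  have hGpos : G.PosDef := by
    refine Matrix.posDef_iff_dotProduct_mulVec.mpr ⟨hGherm, fun x hx => ?_⟩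
    have hxpos : 0 < ∑ i, x i ^ 2 := by
      obtain ⟨i, hi⟩ := Function.ne_iff.mp hx
      refine Finset.sum_pos' (fun i _ => sq_nonneg _) ⟨i, Finset.mem_univ i, ?_⟩
      have : x i ≠ 0 := by simpa using hi
      positivity
    have hq : ∀ k : ℕ, x ⬝ᵥ (F k *ᵥ x) = ∑ i, ((B k *ᵥ x) i) ^ 2 := by
      intro k
      simp only [hFdef]
      rw [← Matrix.mulVec_mulVec, Matrix.dotProduct_mulVec, Matrix.vecMul_transpose]
      simp [dotProduct, sq]
    have hkey : ∀ N, K⁻¹ * ∑ i, x i ^ 2 ≤ x ⬝ᵥ (g N *ᵥ x) := by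
      intro N
      have hterm2 : ∀ k : ℕ, K⁻¹ * ∑ i, x i ^ 2 ≤ x ⬝ᵥ (F k *ᵥ x) := by
        intro k
        rw [hq k, inv_mul_le_iff₀ hK0]
        exact hlow k x
      have hsum : (∑ k ∈ Finset.range (N + 1), F k) *ᵥ x
          = ∑ k ∈ Finset.range (N + 1), F k *ᵥ x := by
        induction (Finset.range (N + 1)) using Finset.cons_induction with
        | empty => simp
        | cons a s ha ih => rw [Finset.sum_cons, Finset.sum_cons, Matrix.add_mulVec, ih]
      have hdotsum : ∀ (y : ℕ → Fin m → ℝ),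
          x ⬝ᵥ (∑ k ∈ Finset.range (N + 1), y k)
          = ∑ k ∈ Finset.range (N + 1), x ⬝ᵥ y k := by
        intro y
        induction (Finset.range (N + 1)) using Finset.cons_induction with
        | empty => simp
        | cons a s ha ih => rw [Finset.sum_cons, Finset.sum_cons, dotProduct_add, ih]
      have hexp : x ⬝ᵥ (g N *ᵥ x)
          = ((N:ℝ) + 1)⁻¹ * ∑ k ∈ Finset.range (N + 1), x ⬝ᵥ (F k *ᵥ x) := by
        simp only [hgdef]
        rw [Matrix.smul_mulVec, dotProduct_smul, smul_eq_mul, hsum, hdotsum]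
      rw [hexp]
      have hN : ((N:ℝ) + 1) ≠ 0 := by positivity
      have hsumge : ((N:ℝ) + 1) * (K⁻¹ * ∑ i, x i ^ 2)
          ≤ ∑ k ∈ Finset.range (N + 1), x ⬝ᵥ (F k *ᵥ x) := by
        calc ((N:ℝ) + 1) * (K⁻¹ * ∑ i, x i ^ 2)
            = ∑ _k ∈ Finset.range (N + 1), (K⁻¹ * ∑ i, x i ^ 2) := by
              rw [Finset.sum_const, Finset.card_range, nsmul_eq_mul]; push_cast; ring
          _ ≤ _ := Finset.sum_le_sum fun k _ => hterm2 k
      calc K⁻¹ * ∑ i, x i ^ 2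
          = ((N:ℝ) + 1)⁻¹ * (((N:ℝ) + 1) * (K⁻¹ * ∑ i, x i ^ 2)) :=
            (inv_mul_cancel_left₀ hN _).symm
        _ ≤ ((N:ℝ) + 1)⁻¹ * ∑ k ∈ Finset.range (N + 1), x ⬝ᵥ (F k *ᵥ x) :=
            mul_le_mul_of_nonneg_left hsumge (by positivity)
    have hlim2 : Tendsto (fun n => x ⬝ᵥ (g (φ n) *ᵥ x)) atTop (𝓝 (x ⬝ᵥ (G *ᵥ x))) := by
      have hcont : Continuous fun M : Matrix (Fin m) (Fin m) ℝ => x ⬝ᵥ (M *ᵥ x) :=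
        (continuous_const (y := x)).dotProduct (continuous_id.matrix_mulVec continuous_const)
      exact (hcont.tendsto G).comp hφlim
    have hge : K⁻¹ * ∑ i, x i ^ 2 ≤ x ⬝ᵥ (G *ᵥ x) :=
      ge_of_tendsto' hlim2 fun n => hkey (φ n)
    have hstar : star x = x := by
      funext i; simp
    rw [hstar]
    calc (0:ℝ) < K⁻¹ * ∑ i, x i ^ 2 := by positivity
      _ ≤ x ⬝ᵥ (G *ᵥ x) := hge
  -- square root
  have hGsemi : G.PosSemidef := hGpos.posSemidef
  obtain ⟨Q, hQ2', hQh⟩ : ∃ Q : Matrix (Fin m) (Fin m) ℝ, Q * Q = G ∧ Qᴴ = Q := by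
    open scoped MatrixOrder in
    exact ⟨CFC.sqrt G, CFC.sqrt_mul_sqrt_self G hGsemi.nonneg, (CFC.sqrt_nonneg G).posSemidef.1⟩
  have hQ2 : Q * Q = G := hQ2'
  have hQt : Qᵀ = Q := by
    have h7 : Qᴴ = Q := hQh
    have h8 : Qᴴ = Qᵀ := by ext i j; simp [Matrix.conjTranspose_apply]
    rw [← h8, h7]
  have hQdetunit : IsUnit Q.det := by
    have hdet : Q.det * Q.det = G.det := by rw [← Matrix.det_mul, hQ2]
    refine isUnit_iff_ne_zero.mpr fun h => ?_
    have h9 := hGpos.det_pos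
    rw [← hdet, h, mul_zero] at h9
    exact lt_irrefl _ h9
  have hQQinv : Q * Q⁻¹ = 1 := Matrix.mul_nonsing_inv Q hQdetunit
  have hQinvQ : Q⁻¹ * Q = 1 := Matrix.nonsing_inv_mul Q hQdetunit
  have hPunit : IsUnit (Q⁻¹) := by
    rw [Matrix.isUnit_iff_isUnit_det, Matrix.det_nonsing_inv, isUnit_ringInverse]
    exact hQdetunit
  have hPinv : (Q⁻¹)⁻¹ = Q := Matrix.nonsing_inv_nonsing_inv Q hQdetunit
  have hQunit : IsUnit Q := (Matrix.isUnit_iff_isUnit_det Q).mpr hQdetunit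
  set WQ : GL (Fin m) ℝ := hQunit.unit with hWQdef
  have hWQcoe : (WQ : Matrix (Fin m) (Fin m) ℝ) = Q := hQunit.unit_spec
  have hWQinvcoe : ((WQ⁻¹ : GL (Fin m) ℝ) : Matrix (Fin m) (Fin m) ℝ) = Q⁻¹ := by
    rw [Matrix.coe_units_inv, hWQcoe]
  set V : GL (Fin m) ℝ := WQ * U * WQ⁻¹ with hVdef
  have hVk : ∀ k : ℤ, ((V ^ k : GL (Fin m) ℝ) : Matrix (Fin m) (Fin m) ℝ) = Q * B k * Q⁻¹ := by
    intro k
    have h1 : V ^ k = WQ * U ^ k * WQ⁻¹ := by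
      have h10 := map_zpow (MulAut.conj WQ) U k
      simp only [MulAut.conj_apply] at h10
      rw [hVdef, ← h10]
    rw [h1, Units.val_mul, Units.val_mul, hWQcoe, hWQinvcoe, hUB]
  have hVorth : ((V : GL (Fin m) ℝ) : Matrix (Fin m) (Fin m) ℝ)
      ∈ Matrix.orthogonalGroup (Fin m) ℝ := by
    have hcoe : (V : Matrix (Fin m) (Fin m) ℝ) = Q * B 1 * Q⁻¹ := by
      have h11 := hVk 1
      rwa [zpow_one] at h11
    rw [Matrix.mem_unitaryGroup_iff']
    have hstarM : star ((V : GL (Fin m) ℝ) : Matrix (Fin m) (Fin m) ℝ)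
        = ((V : GL (Fin m) ℝ) : Matrix (Fin m) (Fin m) ℝ)ᵀ := by
      ext i j; simp [Matrix.star_apply]
    rw [hstarM, hcoe, Matrix.transpose_mul, Matrix.transpose_mul,
      Matrix.transpose_nonsing_inv, hQt]
    calc Q⁻¹ * ((B 1)ᵀ * Q) * (Q * B 1 * Q⁻¹)
        = Q⁻¹ * ((B 1)ᵀ * (Q * Q) * B 1) * Q⁻¹ := by
          simp only [Matrix.mul_assoc]
      _ = Q⁻¹ * ((B 1)ᵀ * G * B 1) * Q⁻¹ := by rw [hQ2]
      _ = Q⁻¹ * G * Q⁻¹ := by rw [hinv]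
      _ = Q⁻¹ * (Q * Q) * Q⁻¹ := by rw [hQ2]
      _ = (Q⁻¹ * Q) * (Q * Q⁻¹) := by simp only [Matrix.mul_assoc]
      _ = 1 := by rw [hQinvQ, hQQinv, one_mul]
  refine ⟨Q⁻¹, hPunit, fun k => ?_⟩
  rw [hPinv]
  have h12 := orth_zpow' V hVorth k
  rwa [hVk k] at h12
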